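/- Let θ₁, θ₂ > 0 and α₁ > 2. For every x > 0 there exists a unique q₁ = q₁(x) ∈ (0,x) satisfying θ₁α₁ q₁^{α₁−1} = 2θ₂(x − q₁); set q₂(x) = x − q₁(x). Then as x → ∞: q₁(x) / (2θ₂x/(θ₁α₁))^{1/(α₁−1)} → 1, q₂(x)/x → 1, and (θ₁ q₁(x)^{α₁} + θ₂ q₂(x)²) / (θ₂ x²) → 1. (Asymptotic solution of the exponent-balancing system in Proposition 1, part 3c.) -/

import Mathlib

open Filter Real

/-- Asymptotic solution of the exponent-balancing system in Proposition 1, part 3c: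
for `θ₁, θ₂ > 0` and `α₁ > 2`, the system `q₁ + q₂ = x`,
`θ₁ α₁ q₁^{α₁-1} = 2 θ₂ q₂` has a unique solution with `q₁ ∈ (0,x)`, and as `x → ∞`,
`q₁(x)/(2θ₂x/(θ₁α₁))^{1/(α₁-1)} → 1`, `q₂(x)/x → 1`, and
`(θ₁ q₁(x)^{α₁} + θ₂ q₂(x)²)/(θ₂ x²) → 1`. -/
theorem stmt16
    (θ₁ θ₂ α₁ : ℝ) (hθ₁ : 0 < θ₁) (hθ₂ : 0 < θ₂) (hα₁ : 2 < α₁)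
    (q₁ : ℝ → ℝ)
    (hq : ∀ x : ℝ, 0 < x → q₁ x ∈ Set.Ioo 0 x ∧
        θ₁ * α₁ * q₁ x ^ (α₁ - 1) = 2 * θ₂ * (x - q₁ x)) :
    (∀ x : ℝ, 0 < x → ∃! q : ℝ, q ∈ Set.Ioo 0 x ∧
        θ₁ * α₁ * q ^ (α₁ - 1) = 2 * θ₂ * (x - q)) ∧
      Tendsto (fun x =>
          q₁ x / (2 * θ₂ * x / (θ₁ * α₁)) ^ (1 / (α₁ - 1))) atTop (nhds 1) ∧
      Tendsto (fun x => (x - q₁ x) / x) atTop (nhds 1) ∧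
      Tendsto (fun x =>
          (θ₁ * q₁ x ^ α₁ + θ₂ * (x - q₁ x) ^ 2) / (θ₂ * x ^ 2)) atTop (nhds 1) := by
  have hα : (0:ℝ) < α₁ - 1 := by linarith
  have hα2 : (0:ℝ) < α₁ - 2 := by linarith
  have hα0 : (0:ℝ) < α₁ := by linarith
  set c := θ₁ * α₁ / (2 * θ₂) with hc_def
  have hc : 0 < c := by positivity
  -- key reformulation
  have key : ∀ x : ℝ, 0 < x → x = q₁ x + c * q₁ x ^ (α₁ - 1) := by
    intro x hx
    have h := (hq x hx).2
    have h2 : (2*θ₂) ≠ 0 := by positivity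
    rw [hc_def]
    field_simp
    nlinarith [h]
  -- uniqueness
  have uniq : ∀ x : ℝ, 0 < x → ∃! q : ℝ, q ∈ Set.Ioo 0 x ∧
      θ₁ * α₁ * q ^ (α₁ - 1) = 2 * θ₂ * (x - q) := by
    intro x hx
    have mono : StrictMonoOn (fun q : ℝ => θ₁*α₁*q^(α₁-1) + 2*θ₂*q) (Set.Ici 0) := by
      intro a ha b hb hab
      have h1 : a ^ (α₁-1) < b ^ (α₁-1) := Real.rpow_lt_rpow ha hab hα
      have h2 : 0 < θ₁ * α₁ := by positivity
      simp only
      nlinarith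
    refine ⟨q₁ x, ⟨(hq x hx).1, (hq x hx).2⟩, ?_⟩
    rintro q ⟨hqmem, hqeq⟩
    have hg : (fun q : ℝ => θ₁*α₁*q^(α₁-1) + 2*θ₂*q) q =
        (fun q : ℝ => θ₁*α₁*q^(α₁-1) + 2*θ₂*q) (q₁ x) := by
      have := (hq x hx).2
      simp only
      linarith [hqeq]
    exact mono.injOn (le_of_lt hqmem.1) (le_of_lt (hq x hx).1.1) hg
  -- q₁ tends to infinity
  have htop : Tendsto q₁ atTop atTop := by
    rw [tendsto_atTop]
    intro M
    set M' := max M 1 with hM'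
    have hM'pos : 0 < M' := lt_of_lt_of_le one_pos (le_max_right _ _)
    filter_upwards [eventually_gt_atTop (M' + c * M' ^ (α₁-1)), eventually_gt_atTop (0:ℝ)]
      with x hx hx0
    by_contra h
    push_neg at h
    have hq1 : q₁ x < M' := lt_of_lt_of_le h (le_max_left _ _)
    have hq1pos := (hq x hx0).1.1
    have hpow : q₁ x ^ (α₁-1) < M' ^ (α₁-1) := Real.rpow_lt_rpow (le_of_lt hq1pos) hq1 hα
    have hk := key x hx0
    nlinarith
  -- q₁ x / x → 0
  have hsplit : ∀ᶠ x in atTop, q₁ x ^ (α₁ - 1) = q₁ x ^ (α₁ - 2) * q₁ x := by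
    filter_upwards [eventually_gt_atTop (0:ℝ)] with x hx0
    have hq1pos := (hq x hx0).1.1
    rw [show α₁ - 1 = (α₁ - 2) + 1 by ring, Real.rpow_add hq1pos, Real.rpow_one]
  have hratio : Tendsto (fun x => q₁ x / x) atTop (nhds 0) := by
    have hb : Tendsto (fun x => (c * q₁ x ^ (α₁-2))⁻¹) atTop (nhds 0) := by
      apply Tendsto.inv_tendsto_atTop
      exact Tendsto.const_mul_atTop hc ((tendsto_rpow_atTop hα2).comp htop)
    apply tendsto_of_tendsto_of_tendsto_of_le_of_le' tendsto_const_nhds hb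
    · filter_upwards [eventually_gt_atTop (0:ℝ)] with x hx0
      exact div_nonneg (le_of_lt (hq x hx0).1.1) (le_of_lt hx0)
    · filter_upwards [eventually_gt_atTop (0:ℝ), hsplit] with x hx0 hs
      have hq1pos := (hq x hx0).1.1
      have hk := key x hx0
      have hpos : 0 < c * q₁ x ^ (α₁-2) := by positivity
      rw [div_le_iff₀ hx0, inv_mul_eq_div, le_div_iff₀ hpos]
      nlinarith
  -- (x - q₁ x)/x → 1
  have hrat2 : Tendsto (fun x => (x - q₁ x) / x) atTop (nhds 1) := by
    have : Tendsto (fun x => 1 - q₁ x / x) atTop (nhds (1 - 0)) :=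
      tendsto_const_nhds.sub hratio
    rw [sub_zero] at this
    apply this.congr'
    filter_upwards [eventually_gt_atTop (0:ℝ)] with x hx0
    field_simp
  -- first limit
  have hfirst : Tendsto (fun x =>
      q₁ x / (2 * θ₂ * x / (θ₁ * α₁)) ^ (1 / (α₁ - 1))) atTop (nhds 1) := by
    have hcont : Tendsto (fun x => ((x - q₁ x) / x) ^ (1/(α₁-1))) atTop (nhds 1) := by
      have := hrat2.rpow_const (p := 1/(α₁-1)) (Or.inl one_ne_zero)
      rwa [Real.one_rpow] at this
    apply hcont.congr'
    filter_upwards [eventually_gt_atTop (0:ℝ)] with x hx0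
    have hq1pos := (hq x hx0).1.1
    have hq1lt := (hq x hx0).1.2
    have hsub : 0 < x - q₁ x := by linarith
    have hkey : c * q₁ x ^ (α₁ - 1) = x - q₁ x := by linarith [key x hx0]
    have hd : 2 * θ₂ * x / (θ₁ * α₁) = x / c := by
      rw [hc_def]; field_simp
    have hqval : q₁ x = ((x - q₁ x) / c) ^ (1/(α₁-1)) := by
      have h1 : (x - q₁ x) / c = q₁ x ^ (α₁ - 1) := by
        field_simp [hkey.symm]
        linarith [hkey]
      rw [h1, ← Real.rpow_mul (le_of_lt hq1pos), mul_one_div, div_self (ne_of_gt hα)]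
      exact (Real.rpow_one _).symm
    rw [hd]
    have hdpos : 0 < (x / c) ^ (1/(α₁-1)) := Real.rpow_pos_of_pos (by positivity) _
    rw [eq_div_iff (ne_of_gt hdpos), ← Real.mul_rpow (by positivity) (by positivity),
      show (x - q₁ x) / x * (x / c) = (x - q₁ x) / c by field_simp]
    exact hqval.symm
  -- third limit
  have hthird : Tendsto (fun x =>
      (θ₁ * q₁ x ^ α₁ + θ₂ * (x - q₁ x) ^ 2) / (θ₂ * x ^ 2)) atTop (nhds 1) := by
    have hlim : Tendsto (fun x => (x - q₁ x)/x * (2/α₁ * (q₁ x / x) + (x - q₁ x)/x))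
        atTop (nhds (1 * (2/α₁ * 0 + 1))) :=
      hrat2.mul ((tendsto_const_nhds.mul hratio).add hrat2)
    rw [show (1 : ℝ) * (2/α₁ * 0 + 1) = 1 by ring] at hlim
    apply hlim.congr'
    filter_upwards [eventually_gt_atTop (0:ℝ)] with x hx0
    have hq1pos := (hq x hx0).1.1
    have heq := (hq x hx0).2
    have hpow : q₁ x ^ α₁ = q₁ x ^ (α₁ - 1) * q₁ x := by
      nth_rewrite 1 [show α₁ = (α₁ - 1) + 1 by ring]
      rw [Real.rpow_add hq1pos, Real.rpow_one]
    have hrw : θ₁ * q₁ x ^ α₁ = 2 * θ₂ * (x - q₁ x) * q₁ x / α₁ := by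
      rw [hpow]
      field_simp
      nlinarith [heq]
    rw [hrw]
    field_simp
  exact ⟨uniq, hfirst, hrat2, hthird⟩
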